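/- In the key-renewal chain where each ephemeral key pair is valid for at most d time units and a new pair is generated before expiry, the compromise of the current session's pre-shared key does not allow derivation of any session key established strictly before the compromise time (perfect forward secrecy in the symbolic model with ephemeral DH values erased after use). -/
import Mathlib


/-- Symbolic messages for the PSK-DHE model: atoms (names of secrets such as the PSK
and the ephemeral exponents), pairs, group elements `gexp A` representing `g` raised
to the product of the atomic exponents in the finite set `A` (so `gexp ∅ = g`,
`gexp {x} = g^x`, `gexp {x, y} = g^(x·y)`), and `kdf a b` the key derived from `a`
and `b`. -/
inductive Msg where
  | atom : ℕ → Msg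
  | pair : Msg → Msg → Msg
  | gexp : Finset ℕ → Msg
  | kdf : Msg → Msg → Msg
deriving DecidableEq

/-- Dolev-Yao deduction with the symbolic Diffie-Hellman rule: `g` is public, and
`g^(x·y)` (more generally any further exponentiation) is derivable only from a known
group element together with a known exponent; `kdf` is derivable only from both of its
arguments. -/
inductive Knows : Set Msg → Msg → Prop where
  | mem {S m} : m ∈ S → Knows S m
  | pair_intro {S m n} : Knows S m → Knows S n → Knows S (Msg.pair m n)
  | fst {S m n} : Knows S (Msg.pair m n) → Knows S m
  | snd {S m n} : Knows S (Msg.pair m n) → Knows S n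
  | g_pub {S} : Knows S (Msg.gexp ∅)
  | dh {S A x} : Knows S (Msg.gexp A) → Knows S (Msg.atom x) →
      Knows S (Msg.gexp (insert x A))
  | kdf_intro {S a b} : Knows S a → Knows S b → Knows S (Msg.kdf a b)

/-- Session key of session `s`: `K_s = kdf(psk, g^(e_s · f_s))`. -/
def sessionKey (psk : ℕ) (e f : ℕ → ℕ) (s : ℕ) : Msg :=
  Msg.kdf (Msg.atom psk) (Msg.gexp {e s, f s})

/-- Adversary knowledge after a compromise revealing the pre-shared key: the PSK plus
all public DH transcripts `g^(e_s)`, `g^(f_s)` of every session. The ephemeral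
exponents `e_s`, `f_s` themselves were erased after use and are never available. -/
def postCompromiseKnowledge (psk : ℕ) (e f : ℕ → ℕ) : Set Msg :=
  insert (Msg.atom psk)
    { m | ∃ s, m = Msg.gexp {e s} ∨ m = Msg.gexp {f s} }

def Good (psk es fs : ℕ) : Msg → Prop
  | .atom x => x = psk
  | .pair m n => Good psk es fs m ∧ Good psk es fs n
  | .gexp A => es ∉ A ∨ fs ∉ A
  | .kdf a b => Good psk es fs a ∧ Good psk es fs b

theorem good_of_knows (psk : ℕ) (e f : ℕ → ℕ) (s : ℕ)
    (hef : ∀ a b, e a ≠ f b)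
    (hpe : ∀ a, e a ≠ psk) (hpf : ∀ a, f a ≠ psk)
    {m : Msg} (h : Knows (postCompromiseKnowledge psk e f) m) :
    Good psk (e s) (f s) m := by
  induction h with
  | mem hm =>
      rcases hm with hm | ⟨t, ht | ht⟩
      · subst hm; rfl
      · subst ht
        right
        simp only [Finset.mem_singleton]
        exact fun hx => hef t s hx.symm
      · subst ht
        left
        simp only [Finset.mem_singleton]
        exact fun hx => hef s t hx
  | pair_intro _ _ ih1 ih2 => exact ⟨ih1, ih2⟩
  | fst _ ih => exact ih.1
  | snd _ ih => exact ih.2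
  | g_pub => left; simp
  | dh _ _ ihg iha =>
      have hx : _ = psk := iha
      subst hx
      rcases ihg with h | h
      · left; simp only [Finset.mem_insert]; rintro (h1 | h1)
        · exact hpe s h1
        · exact h h1
      · right; simp only [Finset.mem_insert]; rintro (h1 | h1)
        · exact hpf s h1
        · exact h h1
  | kdf_intro _ _ ih1 ih2 => exact ⟨ih1, ih2⟩

/-- **Perfect forward secrecy (symbolic model).** Let the ephemeral exponents
`e_s, f_s` be pairwise-distinct fresh atoms, distinct from the PSK, erased after each
session. Even if the adversary compromises the pre-shared key at session `c` and holds
all public transcripts, it cannot derive the session key of any session `s`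
established strictly before the compromise: the symbolic DH rule yields `g^(e_s·f_s)`
only from `g^(e_s)` and `f_s` (or `g^(f_s)` and `e_s`), which are unavailable. -/
theorem perfect_forward_secrecy
    (psk : ℕ) (e f : ℕ → ℕ)
    (he : Function.Injective e) (hf : Function.Injective f)
    (hef : ∀ a b, e a ≠ f b)
    (hpe : ∀ a, e a ≠ psk) (hpf : ∀ a, f a ≠ psk)
    (c : ℕ) (s : ℕ) (hs : s < c) :
    ¬ Knows (postCompromiseKnowledge psk e f) (sessionKey psk e f s) := by
  intro h
  have := (good_of_knows psk e f s hef hpe hpf h).2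
  rcases this with h1 | h1 <;> simp at h1
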